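/- arXiv:2209.07330 — 4 statements merged into one kernel-verified Lean document; each statement's English description precedes it below -/
import Mathlib

section
/- For every real x ≥ 0, the standard normal cumulative distribution function satisfies (1/(√(2π)(1+x)))·exp(−x²/2) ≤ Φ(−x) ≤ (1/(√π·(1+x)))·exp(−x²/2). -/
open MeasureTheory

noncomputable def millsG (y : ℝ) : ℝ := Real.exp (-y ^ 2 / 2) / (1 - y)

noncomputable def millsG' (y : ℝ) : ℝ :=
    Real.exp (-y ^ 2 / 2) * ((-y) * (1 - y) + 1) / (1 - y) ^ 2

lemma millsG_hasDerivAt {y : ℝ} (hy : y ≤ 0) : HasDerivAt millsG (millsG' y) y := by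
  have h1 : (1 : ℝ) - y ≠ 0 := by nlinarith
  have hu : HasDerivAt (fun y : ℝ => -y ^ 2 / 2) (-y) y := by
    have h : HasDerivAt (fun y : ℝ => -y ^ 2 / 2) (-(2 * y ^ 1) / 2) y :=
      (((hasDerivAt_pow 2 y).neg).div_const 2)
    convert h using 1
    ring
  have he : HasDerivAt (fun y : ℝ => Real.exp (-y ^ 2 / 2))
      (Real.exp (-y ^ 2 / 2) * (-y)) y := hu.exp
  have hv : HasDerivAt (fun y : ℝ => 1 - y) (-1) y := by
    simpa using (hasDerivAt_id y).const_sub 1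
  have := he.div hv h1
  refine this.congr_deriv ?_
  unfold millsG'
  field_simp
  ring

lemma millsG'_le {y : ℝ} (hy : y ≤ 0) : millsG' y ≤ Real.exp (-y ^ 2 / 2) := by
  unfold millsG'
  have hd : (0:ℝ) < (1 - y) ^ 2 := by nlinarith
  rw [div_le_iff₀ hd]
  have h := Real.exp_pos (-y ^ 2 / 2)
  nlinarith

lemma millsG'_nonneg {y : ℝ} (hy : y ≤ 0) : 0 ≤ millsG' y := by
  unfold millsG'
  have h := (Real.exp_pos (-y ^ 2 / 2)).le
  have : (0:ℝ) ≤ (-y) * (1 - y) + 1 := by nlinarith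
  positivity

lemma le_sqrt2_millsG' {y : ℝ} (hy : y ≤ 0) :
    Real.exp (-y ^ 2 / 2) ≤ Real.sqrt 2 * millsG' y := by
  unfold millsG'
  have hs : Real.sqrt 2 ^ 2 = 2 := Real.sq_sqrt (by norm_num)
  have h2 : (1:ℝ) < Real.sqrt 2 := by
    nlinarith [Real.sqrt_nonneg 2]
  have hd : (0:ℝ) < (1 - y) ^ 2 := by nlinarith
  rw [show Real.sqrt 2 * (Real.exp (-y ^ 2 / 2) * (-y * (1 - y) + 1) / (1 - y) ^ 2) =
      Real.sqrt 2 * (Real.exp (-y ^ 2 / 2) * (-y * (1 - y) + 1)) / (1 - y) ^ 2 from by ring,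
    le_div_iff₀ hd]
  have halg : (1 - y) ^ 2 ≤ Real.sqrt 2 * (y ^ 2 - y + 1) := by
    nlinarith [hs, sq_nonneg (2 * y + Real.sqrt 2), Real.sqrt_nonneg 2]
  nlinarith [mul_le_mul_of_nonneg_left halg (Real.exp_pos (-y ^ 2 / 2)).le]

lemma gauss_integrableOn (a : ℝ) :
    IntegrableOn (fun t : ℝ => Real.exp (-t ^ 2 / 2)) (Set.Iic a) := by
  have : Integrable (fun t : ℝ => Real.exp (-(1/2) * t ^ 2)) :=
    integrable_exp_neg_mul_sq (by norm_num)
  have h2 : Integrable (fun t : ℝ => Real.exp (-t ^ 2 / 2)) := by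
    convert this using 2 with t
    ring_nf
  exact h2.integrableOn

lemma millsG'_integrableOn {a : ℝ} (ha : a ≤ 0) :
    IntegrableOn millsG' (Set.Iic a) := by
  refine Integrable.mono' (gauss_integrableOn a) ?_ ?_
  · apply Measurable.aestronglyMeasurable
    unfold millsG'
    fun_prop
  · rw [ae_restrict_iff' measurableSet_Iic]
    filter_upwards with y hy
    have hy0 : y ≤ 0 := le_trans hy ha
    rw [Real.norm_eq_abs, abs_of_nonneg (millsG'_nonneg hy0)]
    exact millsG'_le hy0

lemma millsG_tendsto : Filter.Tendsto millsG Filter.atBot (nhds 0) := by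
  have hb : Filter.Tendsto (fun y : ℝ => Real.exp (-y ^ 2 / 2)) Filter.atBot (nhds 0) := by
    have h1 : Filter.Tendsto (fun y : ℝ => y ^ 2 / 2) Filter.atBot Filter.atTop := by
      apply Filter.Tendsto.atTop_div_const (by norm_num)
      have := (Filter.tendsto_pow_atTop (two_ne_zero)).comp (Filter.tendsto_neg_atBot_atTop (G := ℝ))
      simpa [Function.comp_def, neg_sq] using this
    have h2 : Filter.Tendsto (fun y : ℝ => -y ^ 2 / 2) Filter.atBot Filter.atBot := by
      simpa [Function.comp_def, neg_div] using Filter.tendsto_neg_atTop_atBot.comp h1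
    exact Real.tendsto_exp_atBot.comp h2
  apply squeeze_zero' (g := fun y : ℝ => Real.exp (-y ^ 2 / 2))
  · filter_upwards [Filter.eventually_le_atBot (0:ℝ)] with y hy
    unfold millsG
    have : (0:ℝ) < 1 - y := by linarith
    positivity
  · filter_upwards [Filter.eventually_le_atBot (0:ℝ)] with y hy
    unfold millsG
    rw [div_le_iff₀ (by linarith)]
    nlinarith [Real.exp_pos (-y ^ 2 / 2)]
  · exact hb

lemma mills_integral_eq {a : ℝ} (ha : a ≤ 0) :
    ∫ y in Set.Iic a, millsG' y = millsG a := by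
  have := integral_Iic_of_hasDerivAt_of_tendsto'
    (f := millsG) (f' := millsG') (a := a)
    (fun y hy => millsG_hasDerivAt (le_trans hy ha))
    (millsG'_integrableOn ha) millsG_tendsto
  simpa using this

theorem stmt0 (x : ℝ) (hx : 0 ≤ x) :
    1 / (Real.sqrt (2 * Real.pi) * (1 + x)) * Real.exp (-x ^ 2 / 2) ≤
        (Real.sqrt (2 * Real.pi))⁻¹ * (∫ t in Set.Iic (-x), Real.exp (-t ^ 2 / 2)) ∧
      (Real.sqrt (2 * Real.pi))⁻¹ * (∫ t in Set.Iic (-x), Real.exp (-t ^ 2 / 2)) ≤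
        1 / (Real.sqrt Real.pi * (1 + x)) * Real.exp (-x ^ 2 / 2) := by
  have hax : (-x : ℝ) ≤ 0 := by linarith
  have hGa : millsG (-x) = Real.exp (-x ^ 2 / 2) / (1 + x) := by
    unfold millsG
    ring_nf
  have hlow : millsG (-x) ≤ ∫ t in Set.Iic (-x), Real.exp (-t ^ 2 / 2) := by
    rw [← mills_integral_eq hax]
    apply setIntegral_mono_on (millsG'_integrableOn hax) (gauss_integrableOn (-x))
      measurableSet_Iic
    intro y hy
    exact millsG'_le (le_trans hy hax)
  have hup : (∫ t in Set.Iic (-x), Real.exp (-t ^ 2 / 2)) ≤ Real.sqrt 2 * millsG (-x) := by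
    rw [← mills_integral_eq hax, ← integral_const_mul]
    apply setIntegral_mono_on (gauss_integrableOn (-x))
      ((millsG'_integrableOn hax).const_mul _) measurableSet_Iic
    intro y hy
    exact le_sqrt2_millsG' (le_trans hy hax)
  have hsqrt : 0 < Real.sqrt (2 * Real.pi) := Real.sqrt_pos.mpr (by positivity)
  constructor
  · calc 1 / (Real.sqrt (2 * Real.pi) * (1 + x)) * Real.exp (-x ^ 2 / 2)
        = (Real.sqrt (2 * Real.pi))⁻¹ * millsG (-x) := by
          rw [hGa, one_div, mul_inv, div_eq_mul_inv]; ring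
      _ ≤ _ := by
          apply mul_le_mul_of_nonneg_left hlow (by positivity)
  · calc (Real.sqrt (2 * Real.pi))⁻¹ * (∫ t in Set.Iic (-x), Real.exp (-t ^ 2 / 2))
        ≤ (Real.sqrt (2 * Real.pi))⁻¹ * (Real.sqrt 2 * millsG (-x)) := by
          apply mul_le_mul_of_nonneg_left hup (by positivity)
      _ = 1 / (Real.sqrt Real.pi * (1 + x)) * Real.exp (-x ^ 2 / 2) := by
          rw [hGa]
          have h2pi : Real.sqrt (2 * Real.pi) = Real.sqrt 2 * Real.sqrt Real.pi :=
            Real.sqrt_mul (by norm_num) _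
          have hs2 : (0:ℝ) < Real.sqrt 2 := Real.sqrt_pos.mpr (by norm_num)
          have hspi : (0:ℝ) < Real.sqrt Real.pi := Real.sqrt_pos.mpr Real.pi_pos
          rw [h2pi]
          field_simp
end

section
/- Let K ≥ 2 and let σ : Fin K → ℝ be positive reals, with a distinguished index a*. Define w*(a*) = σ(a*)/(σ(a*) + √(∑_{b≠a*} σ(b)²)) and w*(a) = (1 − w*(a*))·σ(a)²/∑_{b≠a*} σ(b)² for a ≠ a*. Then w* is a probability vector (all entries positive, summing to 1), and w* maximizes, over all probability vectors w with positive entries, the quantity min_{a≠a*} 1/(σ(a*)²/w(a*) + σ(a)²/w(a)); moreover the maximal value equals 1/(σ(a*) + √(∑_{b≠a*} σ(b)²))². -/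
open Finset

theorem stmt1 (K : ℕ) (hK : 2 ≤ K) (σ : Fin K → ℝ) (hσ : ∀ a, 0 < σ a)
    (astar : Fin K) (wstar : Fin K → ℝ)
    (hws : wstar astar =
      σ astar / (σ astar + Real.sqrt (∑ b ∈ Finset.univ.erase astar, (σ b) ^ 2)))
    (hw : ∀ a, a ≠ astar → wstar a =
      (1 - wstar astar) * (σ a) ^ 2 / ∑ b ∈ Finset.univ.erase astar, (σ b) ^ 2) :
    (∀ a, 0 < wstar a) ∧ (∑ a, wstar a = 1) ∧
    (∀ w : Fin K → ℝ, (∀ a, 0 < w a) → (∑ a, w a = 1) →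
      (⨅ a : {a : Fin K // a ≠ astar}, 1 / ((σ astar) ^ 2 / w astar + (σ a.1) ^ 2 / w a.1)) ≤
      (⨅ a : {a : Fin K // a ≠ astar},
        1 / ((σ astar) ^ 2 / wstar astar + (σ a.1) ^ 2 / wstar a.1))) ∧
    (⨅ a : {a : Fin K // a ≠ astar},
        1 / ((σ astar) ^ 2 / wstar astar + (σ a.1) ^ 2 / wstar a.1)) =
      1 / (σ astar + Real.sqrt (∑ b ∈ Finset.univ.erase astar, (σ b) ^ 2)) ^ 2 := by
  have hnt : Nontrivial (Fin K) := Fin.nontrivial_iff_two_le.mpr hK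
  obtain ⟨a0, ha0⟩ := exists_ne astar
  haveI : Nonempty {a : Fin K // a ≠ astar} := ⟨⟨a0, ha0⟩⟩
  set S := ∑ b ∈ Finset.univ.erase astar, (σ b) ^ 2 with hSdef
  have ha0mem : a0 ∈ Finset.univ.erase astar := Finset.mem_erase.mpr ⟨ha0, Finset.mem_univ a0⟩
  have hS : 0 < S := Finset.sum_pos (fun b _ => pow_pos (hσ b) 2) ⟨a0, ha0mem⟩
  set s := Real.sqrt S with hsdef
  have hs : 0 < s := Real.sqrt_pos.mpr hS
  have hs2 : s ^ 2 = S := Real.sq_sqrt hS.le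
  have hσa : 0 < σ astar := hσ astar
  have hσs : 0 < σ astar + s := by linarith
  have hwsp : 0 < wstar astar := by rw [hws]; positivity
  have h1w : 1 - wstar astar = s / (σ astar + s) := by
    rw [hws]; field_simp; ring
  have hwa : ∀ a, a ≠ astar → wstar a = σ a ^ 2 / (s * (σ astar + s)) := by
    intro a ha
    rw [hw a ha, h1w, ← hs2]
    field_simp
  have hpos : ∀ a, 0 < wstar a := by
    intro a
    by_cases ha : a = astar
    · rw [ha]; exact hwsp
    · rw [hwa a ha]; exact div_pos (pow_pos (hσ a) 2) (mul_pos hs hσs)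
  have hconst : ∀ a : Fin K, a ≠ astar →
      σ astar ^ 2 / wstar astar + σ a ^ 2 / wstar a = (σ astar + s) ^ 2 := by
    intro a ha
    rw [hws, hwa a ha]
    have hσa' : σ a ≠ 0 := (hσ a).ne'
    field_simp
  have hinfval : (⨅ a : {a : Fin K // a ≠ astar},
      1 / ((σ astar) ^ 2 / wstar astar + (σ a.1) ^ 2 / wstar a.1)) =
      1 / (σ astar + s) ^ 2 := by
    have : ∀ a : {a : Fin K // a ≠ astar},
        1 / ((σ astar) ^ 2 / wstar astar + (σ a.1) ^ 2 / wstar a.1) =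
        1 / (σ astar + s) ^ 2 := fun a => by rw [hconst a.1 a.2]
    rw [iInf_congr this]
    exact ciInf_const
  refine ⟨hpos, ?_, ?_, hinfval⟩
  · -- sum = 1
    have h1 : ∑ a ∈ Finset.univ.erase astar, wstar a + wstar astar = ∑ a, wstar a :=
      Finset.sum_erase_add _ _ (Finset.mem_univ astar)
    have h2 : ∑ a ∈ Finset.univ.erase astar, wstar a = s / (σ astar + s) := by
      have : ∑ a ∈ Finset.univ.erase astar, wstar a =
          ∑ a ∈ Finset.univ.erase astar, σ a ^ 2 / (s * (σ astar + s)) := by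
        refine Finset.sum_congr rfl fun a ha => hwa a (Finset.mem_erase.mp ha).1
      rw [this, ← Finset.sum_div, ← hSdef, ← hs2]
      field_simp
    rw [← h1, h2, hws]
    field_simp
    ring
  · -- optimality
    intro w hwpos hwsum
    rw [hinfval]
    -- find a with σ a ^2 / w a ≥ S / T
    set T := ∑ a ∈ Finset.univ.erase astar, w a with hTdef
    have hT : 0 < T := Finset.sum_pos (fun b _ => hwpos b) ⟨a0, ha0mem⟩
    have hTw : T + w astar = 1 := by
      rw [hTdef, Finset.sum_erase_add _ _ (Finset.mem_univ astar), hwsum]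
    obtain ⟨a, hamem, haineq⟩ : ∃ a ∈ Finset.univ.erase astar, S / T ≤ σ a ^ 2 / w a := by
      by_contra h
      push_neg at h
      have : S < S := by
        calc S = ∑ a ∈ Finset.univ.erase astar, σ a ^ 2 := hSdef
        _ < ∑ a ∈ Finset.univ.erase astar, (S / T) * w a := by
            refine Finset.sum_lt_sum_of_nonempty ⟨a0, ha0mem⟩ fun a ha => ?_
            have := h a ha
            have hwa' := hwpos a
            rw [div_lt_div_iff₀ hwa' hT] at this
            rw [div_mul_eq_mul_div, lt_div_iff₀ hT]
            linarith
        _ = (S / T) * T := by rw [← Finset.mul_sum]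
        _ = S := by field_simp
      exact lt_irrefl _ this
    have hane : a ≠ astar := (Finset.mem_erase.mp hamem).1
    have key : (σ astar + s) ^ 2 ≤ σ astar ^ 2 / w astar + σ a ^ 2 / w a := by
      have h1 : σ astar ^ 2 / w astar + S / T ≤ σ astar ^ 2 / w astar + σ a ^ 2 / w a := by
        linarith
      refine le_trans ?_ h1
      have hwa' := hwpos astar
      have hT1 : T = 1 - w astar := by linarith
      rw [div_add_div _ _ hwa'.ne' hT.ne', le_div_iff₀ (by positivity), hT1]
      nlinarith [sq_nonneg (σ astar * (1 - w astar) - s * w astar), hs2]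
    have hbdd : BddBelow (Set.range fun a : {a : Fin K // a ≠ astar} =>
        1 / ((σ astar) ^ 2 / w astar + (σ a.1) ^ 2 / w a.1)) := by
      refine ⟨0, ?_⟩
      rintro x ⟨b, rfl⟩
      have := hwpos astar
      have := hwpos b.1
      have := hσ astar
      have := hσ b.1
      positivity
    calc (⨅ a : {a : Fin K // a ≠ astar},
          1 / ((σ astar) ^ 2 / w astar + (σ a.1) ^ 2 / w a.1))
        ≤ 1 / ((σ astar) ^ 2 / w astar + (σ a) ^ 2 / w a) := ciInf_le hbdd ⟨a, hane⟩
      _ ≤ 1 / (σ astar + s) ^ 2 := by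
          apply one_div_le_one_div_of_le (by positivity) key
end

section
/- Let u ≥ λ̄ ≥ 0. Then ∫_{λ̄}^∞ exp(−t²/2) dt / ∫_u^∞ exp(−t²/2) dt ≤ √2 · ((1+u)/(1+λ̄)) · exp((u² − λ̄²)/2). -/
open MeasureTheory

lemma stmt13_exp_integrable : MeasureTheory.Integrable (fun t : ℝ => Real.exp (-t ^ 2 / 2)) := by
  have := integrable_exp_neg_mul_sq (by norm_num : (0:ℝ) < 1/2)
  convert this using 2 with t
  ring_nf

lemma stmt13_aux_integrable (x : ℝ) (hx : 0 ≤ x) :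
    IntegrableOn (fun t : ℝ => (t ^ 2 + t + 1) / (1 + t) ^ 2 * Real.exp (-t ^ 2 / 2))
      (Set.Ioi x) := by
  apply Integrable.mono (stmt13_exp_integrable.integrableOn (s := Set.Ioi x))
  · apply Measurable.aestronglyMeasurable
    fun_prop
  · filter_upwards [self_mem_ae_restrict measurableSet_Ioi] with t ht
    have ht0 : (0:ℝ) < t := lt_of_le_of_lt hx ht
    rw [Real.norm_eq_abs, Real.norm_eq_abs, abs_of_nonneg (Real.exp_pos _).le,
      abs_of_nonneg]
    · have h1 : (t ^ 2 + t + 1) / (1 + t) ^ 2 ≤ 1 := by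
        rw [div_le_one (by positivity)]
        nlinarith
      calc (t ^ 2 + t + 1) / (1 + t) ^ 2 * Real.exp (-t ^ 2 / 2)
          ≤ 1 * Real.exp (-t ^ 2 / 2) :=
            mul_le_mul_of_nonneg_right h1 (Real.exp_pos _).le
        _ = Real.exp (-t ^ 2 / 2) := one_mul _
    · positivity

lemma stmt13_tail_eq (x : ℝ) (hx : 0 ≤ x) :
    (∫ t in Set.Ioi x, (t ^ 2 + t + 1) / (1 + t) ^ 2 * Real.exp (-t ^ 2 / 2))
      = Real.exp (-x ^ 2 / 2) / (1 + x) := by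
  have h1x : (0:ℝ) < 1 + x := by linarith
  have key := integral_Ioi_of_hasDerivAt_of_tendsto'
    (f := fun t : ℝ => -Real.exp (-t ^ 2 / 2) / (1 + t))
    (f' := fun t : ℝ => (t ^ 2 + t + 1) / (1 + t) ^ 2 * Real.exp (-t ^ 2 / 2))
    (a := x) (m := 0) ?_ (stmt13_aux_integrable x hx) ?_
  · rw [key]; ring
  · intro t ht
    have ht0 : (0:ℝ) ≤ t := le_trans hx ht
    have h1t : (1:ℝ) + t ≠ 0 := by positivity
    have hnum : HasDerivAt (fun t : ℝ => -Real.exp (-t ^ 2 / 2))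
        (t * Real.exp (-t ^ 2 / 2)) t := by
      have h1 : HasDerivAt (fun t : ℝ => -t ^ 2 / 2) (-t) t := by
        have := ((hasDerivAt_pow 2 t).neg).div_const 2
        refine this.congr_deriv ?_
        simp; ring
      have := (h1.exp).neg
      refine this.congr_deriv ?_
      ring
    have hden : HasDerivAt (fun t : ℝ => 1 + t) 1 t :=
      (hasDerivAt_id t).const_add 1
    have := hnum.div hden h1t
    refine this.congr_deriv ?_
    field_simp
    ring
  · have hinv : Filter.Tendsto (fun t : ℝ => (1 + t)⁻¹) Filter.atTop (nhds 0) :=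
      Filter.Tendsto.inv_tendsto_atTop
        (Filter.tendsto_atTop_add_const_left Filter.atTop 1 Filter.tendsto_id)
    have hninv : Filter.Tendsto (fun t : ℝ => -(1 + t)⁻¹) Filter.atTop (nhds 0) := by
      simpa using hinv.neg
    apply tendsto_of_tendsto_of_tendsto_of_le_of_le' hninv hinv
    · filter_upwards [Filter.eventually_ge_atTop (0:ℝ)] with t ht
      have h1t : (0:ℝ) < 1 + t := by linarith
      have he : Real.exp (-t ^ 2 / 2) ≤ 1 := by
        rw [show (1:ℝ) = Real.exp 0 by simp]
        apply Real.exp_le_exp.2; nlinarith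
      rw [neg_div, neg_le_neg_iff, div_le_iff₀ h1t]
      calc Real.exp (-t ^ 2 / 2) ≤ 1 := he
        _ = (1 + t)⁻¹ * (1 + t) := by field_simp
    · filter_upwards [Filter.eventually_ge_atTop (0:ℝ)] with t ht
      have h1t : (0:ℝ) < 1 + t := by linarith
      have : 0 ≤ Real.exp (-t ^ 2 / 2) / (1 + t) := by positivity
      have : (0:ℝ) ≤ (1 + t)⁻¹ := by positivity
      calc -Real.exp (-t ^ 2 / 2) / (1 + t) ≤ 0 := by
            rw [neg_div]; simp; positivity
        _ ≤ (1 + t)⁻¹ := by positivity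

theorem stmt13 (u lam : ℝ) (h0 : 0 ≤ lam) (hle : lam ≤ u) :
    (∫ t in Set.Ioi lam, Real.exp (-t ^ 2 / 2)) /
        (∫ t in Set.Ioi u, Real.exp (-t ^ 2 / 2)) ≤
      Real.sqrt 2 * ((1 + u) / (1 + lam)) * Real.exp ((u ^ 2 - lam ^ 2) / 2) := by
  have h0u : (0:ℝ) ≤ u := le_trans h0 hle
  have h1l : (0:ℝ) < 1 + lam := by linarith
  have h1u : (0:ℝ) < 1 + u := by linarith
  have hsqrt : (7/5 : ℝ) ≤ Real.sqrt 2 := by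
    rw [show (7/5:ℝ) = Real.sqrt ((7/5)^2) by rw [Real.sqrt_sq (by norm_num)]]
    exact Real.sqrt_le_sqrt (by norm_num)
  have hsqrt0 : (0:ℝ) ≤ Real.sqrt 2 := Real.sqrt_nonneg 2
  -- lower bound on denominator
  have hden_lb : Real.exp (-u ^ 2 / 2) / (1 + u) ≤ ∫ t in Set.Ioi u, Real.exp (-t ^ 2 / 2) := by
    rw [← stmt13_tail_eq u h0u]
    apply setIntegral_mono_on (stmt13_aux_integrable u h0u)
      (stmt13_exp_integrable.integrableOn) measurableSet_Ioi
    intro t ht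
    have ht0 : (0:ℝ) < t := lt_of_le_of_lt h0u ht
    have h1 : (t ^ 2 + t + 1) / (1 + t) ^ 2 ≤ 1 := by
      rw [div_le_one (by positivity)]
      nlinarith
    calc (t ^ 2 + t + 1) / (1 + t) ^ 2 * Real.exp (-t ^ 2 / 2)
        ≤ 1 * Real.exp (-t ^ 2 / 2) := mul_le_mul_of_nonneg_right h1 (Real.exp_pos _).le
      _ = Real.exp (-t ^ 2 / 2) := one_mul _
  have hden_pos : (0:ℝ) < ∫ t in Set.Ioi u, Real.exp (-t ^ 2 / 2) :=
    lt_of_lt_of_le (by positivity) hden_lb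
  -- upper bound on numerator
  have hnum_ub : (∫ t in Set.Ioi lam, Real.exp (-t ^ 2 / 2))
      ≤ Real.sqrt 2 * (Real.exp (-lam ^ 2 / 2) / (1 + lam)) := by
    rw [← stmt13_tail_eq lam h0, ← integral_const_mul]
    apply setIntegral_mono_on (stmt13_exp_integrable.integrableOn)
      ((stmt13_aux_integrable lam h0).const_mul _) measurableSet_Ioi
    intro t ht
    have ht0 : (0:ℝ) < t := lt_of_le_of_lt h0 ht
    have h1 : (1:ℝ) ≤ Real.sqrt 2 * ((t ^ 2 + t + 1) / (1 + t) ^ 2) := by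
      have h2 : (1:ℝ) ≤ (7/5) * ((t ^ 2 + t + 1) / (1 + t) ^ 2) := by
        rw [mul_div_assoc', le_div_iff₀ (by positivity)]
        nlinarith [sq_nonneg (4*t - 3)]
      calc (1:ℝ) ≤ (7/5) * ((t ^ 2 + t + 1) / (1 + t) ^ 2) := h2
        _ ≤ Real.sqrt 2 * ((t ^ 2 + t + 1) / (1 + t) ^ 2) :=
          mul_le_mul_of_nonneg_right hsqrt (by positivity)
    calc Real.exp (-t ^ 2 / 2) = 1 * Real.exp (-t ^ 2 / 2) := (one_mul _).symm
      _ ≤ Real.sqrt 2 * ((t ^ 2 + t + 1) / (1 + t) ^ 2) * Real.exp (-t ^ 2 / 2) :=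
          mul_le_mul_of_nonneg_right h1 (Real.exp_pos _).le
      _ = Real.sqrt 2 * ((t ^ 2 + t + 1) / (1 + t) ^ 2 * Real.exp (-t ^ 2 / 2)) := by ring
  rw [div_le_iff₀ hden_pos]
  calc (∫ t in Set.Ioi lam, Real.exp (-t ^ 2 / 2))
      ≤ Real.sqrt 2 * (Real.exp (-lam ^ 2 / 2) / (1 + lam)) := hnum_ub
    _ = Real.sqrt 2 * ((1 + u) / (1 + lam)) * Real.exp ((u ^ 2 - lam ^ 2) / 2) *
        (Real.exp (-u ^ 2 / 2) / (1 + u)) := by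
        have he : Real.exp ((u ^ 2 - lam ^ 2) / 2) * Real.exp (-u ^ 2 / 2)
            = Real.exp (-lam ^ 2 / 2) := by
          rw [← Real.exp_add]; ring_nf
        rw [← he]
        field_simp
    _ ≤ Real.sqrt 2 * ((1 + u) / (1 + lam)) * Real.exp ((u ^ 2 - lam ^ 2) / 2) *
        (∫ t in Set.Ioi u, Real.exp (-t ^ 2 / 2)) :=
        mul_le_mul_of_nonneg_left hden_lb (by positivity)
end

section
/- Let σ*, σ_a > 0 for a in a finite index set S (suboptimal arms), w* a probability vector with w*(a*) = σ*/(σ* + √(∑_{a∈S} σ_a²)) and w*(a) = (1 − w*(a*))σ_a²/∑_{b∈S}σ_b² for a ∈ S. Then for each a ∈ S, σ*²/w*(a*) + σ_a²/w*(a) = (σ* + √(∑_{b∈S} σ_b²))², i.e., the objective value is equal across all suboptimal arms at the optimizer. -/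
theorem stmt19 {S : Type*} [Fintype S] [Nonempty S]
    (σstar : ℝ) (σ : S → ℝ) (hstar : 0 < σstar) (hσ : ∀ a, 0 < σ a)
    (wstar_star : ℝ) (w : S → ℝ)
    (hws : wstar_star = σstar / (σstar + Real.sqrt (∑ b, (σ b) ^ 2)))
    (hw : ∀ a, w a = (1 - wstar_star) * (σ a) ^ 2 / ∑ b, (σ b) ^ 2) :
    ∀ a, σstar ^ 2 / wstar_star + (σ a) ^ 2 / w a =
      (σstar + Real.sqrt (∑ b, (σ b) ^ 2)) ^ 2 := by
  intro a
  have hT : (0 : ℝ) < ∑ b, (σ b) ^ 2 :=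
    Finset.sum_pos (fun b _ => pow_pos (hσ b) 2) Finset.univ_nonempty
  set T := ∑ b, (σ b) ^ 2 with hTdef
  have hs : 0 < Real.sqrt T := Real.sqrt_pos.mpr hT
  have hs2 : Real.sqrt T ^ 2 = T := Real.sq_sqrt hT.le
  have hden : 0 < σstar + Real.sqrt T := by linarith
  have h1m : 1 - wstar_star = Real.sqrt T / (σstar + Real.sqrt T) := by
    rw [hws]; field_simp; ring
  rw [hws, hw a, h1m]
  have hσa : (0 : ℝ) < (σ a) ^ 2 := pow_pos (hσ a) 2
  field_simp
  -- ring_nf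
  have hs3 : Real.sqrt T ^ 3 = T * Real.sqrt T := by
    rw [pow_succ, hs2]
  rw [mul_div_cancel_left₀ T (hσ a).ne']
  linear_combination (-1 : ℝ) * hs2
end
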